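/- arXiv:1102.0493 — 2 statements merged into one kernel-verified Lean document; each statement's English description precedes it below -/
import Mathlib

section
/- Let A : ℝ → ℝ be differentiable with A'(z) ≥ η for all z, where η > 0, and let ε > 0. Define ψ_ε(a,b) = ∫_b^a sign_ε(A(z) − A(b)) dz. Then for all a, b ∈ ℝ, |ψ_ε(a,b) − |a − b|| ≤ Cε/η, where C is an absolute constant (independent of a, b, ε, η, A). -/
noncomputable def sgn (σ : ℝ) : ℝ := if σ < 0 then -1 else if σ = 0 then 0 else 1

noncomputable def signEps (ε σ : ℝ) : ℝ :=
  if ε < |σ| then sgn σ else Real.sin (Real.pi * σ / (2 * ε))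

/-- `ψ_ε(a,b) = ∫_b^a sign_ε(A(z) − A(b)) dz`. -/
noncomputable def psiEps (A : ℝ → ℝ) (ε a b : ℝ) : ℝ :=
  ∫ z in b..a, signEps ε (A z - A b)

lemma sgn_abs_le (σ : ℝ) : |sgn σ| ≤ 1 := by
  unfold sgn; split_ifs <;> norm_num

lemma measurable_sgn : Measurable sgn := by
  unfold sgn
  apply Measurable.ite (measurableSet_lt measurable_id measurable_const)
    measurable_const
  exact Measurable.ite (measurableSet_eq_fun measurable_id measurable_const)
    measurable_const measurable_const

lemma measurable_signEps (ε : ℝ) : Measurable (signEps ε) := by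
  unfold signEps
  apply Measurable.ite
  · exact measurableSet_lt measurable_const (measurable_id.abs)
  · exact measurable_sgn
  · exact (Real.continuous_sin.comp (by continuity)).measurable

lemma signEps_abs_le (ε σ : ℝ) : |signEps ε σ| ≤ 1 := by
  unfold signEps
  split_ifs
  · exact sgn_abs_le σ
  · exact Real.abs_sin_le_one _

lemma intervalIntegrable_of_bdd {f : ℝ → ℝ} (hm : Measurable f) {C : ℝ}
    (h : ∀ z, |f z| ≤ C) (a b : ℝ) : IntervalIntegrable f MeasureTheory.volume a b := by
  rw [intervalIntegrable_iff]
  apply MeasureTheory.Integrable.mono' (g := fun _ => C)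
  · exact MeasureTheory.integrableOn_const measure_Ioc_lt_top.ne
  · exact hm.aestronglyMeasurable
  · exact Filter.Eventually.of_forall fun z => h z

theorem stmt2 :
    ∃ C > (0 : ℝ), ∀ (A : ℝ → ℝ) (η ε : ℝ), 0 < η → 0 < ε →
      Differentiable ℝ A → (∀ z, η ≤ deriv A z) →
      ∀ a b : ℝ, abs (psiEps A ε a b - |a - b|) ≤ C * ε / η := by
  refine ⟨4, by norm_num, ?_⟩
  intro A η ε hη hε hA hA' a b
  set r : ℝ := ε / η with hrdef
  have hr0 : 0 < r := div_pos hε hη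
  -- A grows at least linearly
  have hdf : Differentiable ℝ (fun z : ℝ => η * z) := differentiable_id.const_mul η
  have hmono : Monotone (fun z => A z - η * z) := by
    apply monotone_of_deriv_nonneg (hA.sub hdf)
    intro z
    rw [deriv_sub (hA z) (hdf z)]
    have hd : deriv (fun z : ℝ => η * z) z = η := by
      simpa using ((hasDerivAt_id z).const_mul η).deriv
    rw [hd]
    linarith [hA' z]
  have key : ∀ z, η * |z - b| ≤ |A z - A b| := by
    intro z
    rcases le_total b z with h | h
    · have := hmono h
      simp only at this
      have h1 : η * (z - b) ≤ A z - A b := by linarith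
      rw [abs_of_nonneg (by linarith), abs_of_nonneg (by nlinarith)]
      exact h1
    · have := hmono h
      simp only at this
      have h1 : η * (b - z) ≤ A b - A z := by linarith
      rw [abs_of_nonpos (by linarith), abs_of_nonpos (by nlinarith)]
      linarith
  have hlt : ∀ z, b < z → A b < A z := by
    intro z hz
    have h : A b - η * b ≤ A z - η * z := hmono hz.le
    nlinarith [mul_pos hη (sub_pos.2 hz)]
  have hgt : ∀ z, z < b → A z < A b := by
    intro z hz
    have h : A z - η * z ≤ A b - η * b := hmono hz.le
    nlinarith [mul_pos hη (sub_pos.2 hz)]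
  set f : ℝ → ℝ := fun z => signEps ε (A z - A b) - sgn (z - b) with hf
  -- f vanishes outside [b-r, b+r]
  have hzero : ∀ z, z ∉ Set.Icc (b - r) (b + r) → f z = 0 := by
    intro z hz
    simp only [Set.mem_Icc, not_and_or, not_le] at hz
    have habs : ε < |A z - A b| := by
      have hk := key z
      have : η * r < η * |z - b| := by
        apply mul_lt_mul_of_pos_left _ hη
        rcases hz with h | h
        · rw [abs_of_nonpos (by linarith)]; linarith
        · rw [abs_of_nonneg (by linarith)]; linarith
      have hηr : η * r = ε := by rw [hrdef]; field_simp [hη.ne']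
      linarith
    simp only [hf, signEps, if_pos habs]
    rcases hz with h | h
    · have hzb : z < b := by linarith
      have : A z < A b := hgt z hzb
      simp [sgn, sub_neg.2 this, sub_neg.2 hzb]
    · have hzb : b < z := by linarith
      have h1 : A b < A z := hlt z hzb
      have h2 : ¬ (A z - A b < 0) := by linarith
      have h3 : ¬ (A z - A b = 0) := by intro h; linarith
      have h4 : ¬ (z - b < 0) := by linarith
      have h5 : ¬ (z - b = 0) := sub_ne_zero.2 hzb.ne'
      simp [sgn, h2, h3, h4, h5]
  set g : ℝ → ℝ := Set.indicator (Set.Icc (b - r) (b + r)) (fun _ => 2) with hg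
  have hfg : ∀ z, |f z| ≤ g z := by
    intro z
    by_cases hz : z ∈ Set.Icc (b - r) (b + r)
    · rw [hg, Set.indicator_of_mem hz]
      calc |f z| ≤ |signEps ε (A z - A b)| + |sgn (z - b)| := abs_sub _ _
        _ ≤ 1 + 1 := add_le_add (signEps_abs_le _ _) (sgn_abs_le _)
        _ = 2 := by norm_num
    · rw [hg, Set.indicator_of_notMem hz, hzero z hz]
      simp
  have hmf : Measurable f := by
    apply Measurable.sub
    · exact (measurable_signEps ε).comp ((hA.continuous.measurable).sub measurable_const)
    · exact measurable_sgn.comp (measurable_id.sub measurable_const)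
  have hintf : IntervalIntegrable f MeasureTheory.volume b a :=
    intervalIntegrable_of_bdd hmf (C := 2) (fun z => (hfg z).trans (by
      rw [hg]
      by_cases hz : z ∈ Set.Icc (b - r) (b + r)
      · rw [Set.indicator_of_mem hz]
      · rw [Set.indicator_of_notMem hz]; norm_num)) b a
  have hint1 : IntervalIntegrable (fun z => signEps ε (A z - A b)) MeasureTheory.volume b a :=
    intervalIntegrable_of_bdd
      ((measurable_signEps ε).comp ((hA.continuous.measurable).sub measurable_const))
      (C := 1) (fun z => signEps_abs_le _ _) b a
  have hint2 : IntervalIntegrable (fun z => sgn (z - b)) MeasureTheory.volume b a :=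
    intervalIntegrable_of_bdd (measurable_sgn.comp (measurable_id.sub measurable_const))
      (C := 1) (fun z => sgn_abs_le _) b a
  -- ∫ sgn(z-b) = |a-b|
  have hsgn : (∫ z in b..a, sgn (z - b)) = |a - b| := by
    have hb : ∀ᵐ z : ℝ ∂MeasureTheory.volume, z ≠ b := by
      rw [MeasureTheory.ae_iff]
      have : {z : ℝ | ¬ z ≠ b} = {b} := by ext z; simp
      rw [this]; simp
    rcases le_total b a with h | h
    · have : (∫ z in b..a, sgn (z - b)) = ∫ z in b..a, (1 : ℝ) := by
        apply intervalIntegral.integral_congr_ae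
        filter_upwards [hb] with z hz hmem
        rw [Set.uIoc_of_le h] at hmem
        have : b < z := hmem.1
        simp [sgn, not_lt.2 this.le, sub_eq_zero, hz]
      rw [this]
      simp [abs_of_nonneg (by linarith : (0:ℝ) ≤ a - b)]
    · have : (∫ z in b..a, sgn (z - b)) = ∫ z in b..a, (-1 : ℝ) := by
        apply intervalIntegral.integral_congr_ae
        filter_upwards [hb] with z hz hmem
        rw [Set.uIoc_of_ge h] at hmem
        have hz2 : z < b := lt_of_le_of_ne hmem.2 hz
        simp [sgn, sub_neg.2 hz2]
      rw [this]
      simp [abs_of_nonpos (by linarith : a - b ≤ 0)]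
  have hdiff : psiEps A ε a b - |a - b| = ∫ z in b..a, f z := by
    rw [← hsgn, psiEps, ← intervalIntegral.integral_sub hint1 hint2]
  rw [hdiff]
  have hgmeas : MeasurableSet (Set.Icc (b - r) (b + r)) := measurableSet_Icc
  have hgint : MeasureTheory.Integrable g MeasureTheory.volume := by
    rw [hg]
    apply (MeasureTheory.integrable_indicator_iff hgmeas).2
    exact MeasureTheory.integrableOn_const (by simp)
  calc |∫ z in b..a, f z| ≤ ∫ z in Set.uIoc b a, |f z| := by
        simpa [Real.norm_eq_abs] using
          intervalIntegral.norm_integral_le_integral_norm_uIoc (f := f) (a := b) (b := a)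
            (μ := MeasureTheory.volume)
    _ ≤ ∫ z in Set.uIoc b a, g z := by
        apply MeasureTheory.setIntegral_mono
        · exact (hintf.def').norm
        · exact hgint.integrableOn
        · exact hfg
    _ ≤ ∫ z, g z := by
        apply MeasureTheory.setIntegral_le_integral hgint
        filter_upwards with z
        show (0:ℝ) ≤ g z
        rw [hg]
        exact Set.indicator_nonneg (fun _ _ => by norm_num) z
    _ = 4 * ε / η := by
        rw [hg, MeasureTheory.integral_indicator_const _ hgmeas]
        rw [Real.volume_real_Icc]
        have h2r : b + r - (b - r) = 2 * r := by ring
        rw [h2r, max_eq_left (by positivity)]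
        simp [hrdef]
        field_simp
        ring
end

section
/- Let A : ℝ → ℝ be differentiable with A'(z) ≥ η > 0 and let f be Lipschitz with constant M. Let ε > 0 and let sign_ε be the regularized sign function, which is C¹ on ℝ with |sign_ε'| ≤ π/(2ε) and supported (as a derivative) in [−ε, ε]. Then for all u, c ∈ ℝ, |∫_c^u (d/dz)[sign_ε(A(z) − A(c))] · (f(z) − f(c)) dz| ≤ C·M·ε/η for an absolute constant C. -/
noncomputable def sD (ε σ : ℝ) : ℝ :=
  if ε ≤ |σ| then 0 else Real.pi / (2 * ε) * Real.cos (Real.pi * σ / (2 * ε))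

lemma hasDerivAt_inner (ε : ℝ) (hε : 0 < ε) (σ : ℝ) :
    HasDerivAt (fun x => Real.sin (Real.pi * x / (2 * ε)))
      (Real.pi / (2 * ε) * Real.cos (Real.pi * σ / (2 * ε))) σ := by
  have h1 : HasDerivAt (fun x : ℝ => Real.pi * x / (2 * ε)) (Real.pi / (2 * ε)) σ := by
    simpa using ((hasDerivAt_id σ).const_mul Real.pi).div_const (2 * ε)
  have := (Real.hasDerivAt_sin (Real.pi * σ / (2 * ε))).comp σ h1
  simpa [mul_comm, Function.comp_def] using this

lemma signEps_eq_one (ε : ℝ) (hε : 0 < ε) {x : ℝ} (hx : ε ≤ x) : signEps ε x = 1 := by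
  rcases lt_or_eq_of_le hx with h | h
  · have hx0 : 0 < x := lt_trans hε h
    simp [signEps, sgn, abs_of_pos hx0, h, not_lt.2 hx0.le, hx0.ne']
  · have : ¬ ε < |x| := by rw [← h, abs_of_pos hε]; exact lt_irrefl ε
    rw [signEps, if_neg this, ← h]
    rw [show Real.pi * ε / (2 * ε) = Real.pi / 2 by field_simp]
    exact Real.sin_pi_div_two

lemma signEps_eq_neg_one (ε : ℝ) (hε : 0 < ε) {x : ℝ} (hx : x ≤ -ε) : signEps ε x = -1 := by
  rcases lt_or_eq_of_le hx with h | h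
  · have hx0 : x < 0 := lt_trans h (by linarith)
    simp [signEps, sgn, abs_of_neg hx0, hx0]
    intro h'; linarith
  · have : ¬ ε < |x| := by rw [h, abs_neg, abs_of_pos hε]; exact lt_irrefl ε
    rw [signEps, if_neg this, h]
    rw [show Real.pi * (-ε) / (2 * ε) = -(Real.pi / 2) by field_simp]
    rw [Real.sin_neg, Real.sin_pi_div_two]

lemma signEps_eq_sin (ε : ℝ) {x : ℝ} (hx : |x| ≤ ε) :
    signEps ε x = Real.sin (Real.pi * x / (2 * ε)) := by
  rw [signEps, if_neg (not_lt.2 hx)]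

lemma abs_signEps_le_one (ε : ℝ) (σ : ℝ) : |signEps ε σ| ≤ 1 := by
  rw [signEps]
  split
  · rw [sgn]; split
    · simp
    · split <;> simp
  · rw [abs_le]; exact ⟨Real.neg_one_le_sin _, Real.sin_le_one _⟩

lemma hasDerivAt_signEps (ε : ℝ) (hε : 0 < ε) (σ : ℝ) :
    HasDerivAt (signEps ε) (sD ε σ) σ := by
  rcases lt_trichotomy (|σ|) ε with h | h | h
  · -- interior: equals the sine locally
    have habs : ∀ᶠ x in nhds σ, |x| ≤ ε := by
      have : Set.Ioo (-ε) ε ∈ nhds σ := by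
        apply Ioo_mem_nhds <;> cases' abs_lt.1 h with h1 h2 <;> linarith
      filter_upwards [this] with x hx
      rw [abs_le]; exact ⟨hx.1.le, hx.2.le⟩
    have heq : ∀ᶠ x in nhds σ, signEps ε x = Real.sin (Real.pi * x / (2 * ε)) := by
      filter_upwards [habs] with x hx using signEps_eq_sin ε hx
    have := (hasDerivAt_inner ε hε σ).congr_of_eventuallyEq heq
    rw [sD, if_neg (not_le.2 h)]
    exact this
  · -- boundary: σ = ε or σ = -ε
    rw [sD, if_pos h.ge]
    rcases (abs_eq hε.le).1 h with h1 | h1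
    · rw [h1]
      have hIci : HasDerivWithinAt (signEps ε) 0 (Set.Ici ε) ε := by
        exact (hasDerivWithinAt_const ε _ 1).congr
          (fun x hx => signEps_eq_one ε hε hx) (signEps_eq_one ε hε le_rfl)
      have hsin : HasDerivWithinAt (fun x => Real.sin (Real.pi * x / (2 * ε))) 0 (Set.Iic ε) ε := by
        have := (hasDerivAt_inner ε hε ε).hasDerivWithinAt (s := Set.Iic ε)
        have hz : Real.pi / (2 * ε) * Real.cos (Real.pi * ε / (2 * ε)) = 0 := by
          rw [show Real.pi * ε / (2 * ε) = Real.pi / 2 by field_simp,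
            Real.cos_pi_div_two, mul_zero]
        rwa [hz] at this
      have hIic : HasDerivWithinAt (signEps ε) 0 (Set.Iic ε) ε := by
        apply hsin.congr_of_eventuallyEq_of_mem ?_ Set.self_mem_Iic
        have hmem : Set.Ioi (-ε) ∈ nhdsWithin ε (Set.Iic ε) :=
          mem_nhdsWithin_of_mem_nhds (Ioi_mem_nhds (by linarith))
        filter_upwards [hmem, self_mem_nhdsWithin] with x hx1 hx2
        exact signEps_eq_sin ε (abs_le.2 ⟨le_of_lt hx1, hx2⟩)
      have := hIic.union hIci
      rwa [Set.Iic_union_Ici, hasDerivWithinAt_univ] at this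
    · rw [h1]
      have hIic : HasDerivWithinAt (signEps ε) 0 (Set.Iic (-ε)) (-ε) := by
        exact (hasDerivWithinAt_const (-ε) _ (-1)).congr
          (fun x hx => signEps_eq_neg_one ε hε hx)
          (signEps_eq_neg_one ε hε le_rfl)
      have hsin : HasDerivWithinAt (fun x => Real.sin (Real.pi * x / (2 * ε))) 0
          (Set.Ici (-ε)) (-ε) := by
        have := (hasDerivAt_inner ε hε (-ε)).hasDerivWithinAt (s := Set.Ici (-ε))
        have hz : Real.pi / (2 * ε) * Real.cos (Real.pi * (-ε) / (2 * ε)) = 0 := by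
          rw [show Real.pi * (-ε) / (2 * ε) = -(Real.pi / 2) by field_simp,
            Real.cos_neg, Real.cos_pi_div_two, mul_zero]
        rwa [hz] at this
      have hIci : HasDerivWithinAt (signEps ε) 0 (Set.Ici (-ε)) (-ε) := by
        apply hsin.congr_of_eventuallyEq_of_mem ?_ Set.self_mem_Ici
        have hmem : Set.Iio ε ∈ nhdsWithin (-ε) (Set.Ici (-ε)) :=
          mem_nhdsWithin_of_mem_nhds (Iio_mem_nhds (by linarith))
        filter_upwards [hmem, self_mem_nhdsWithin] with x hx1 hx2
        exact signEps_eq_sin ε (abs_le.2 ⟨hx2, le_of_lt hx1⟩)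
      have := hIic.union hIci
      rwa [Set.Iic_union_Ici, hasDerivWithinAt_univ] at this
  · -- outside: locally constant
    rw [sD, if_pos h.le]
    rcases lt_abs.1 h with h1 | h1
    · have hmem : Set.Ioi ε ∈ nhds σ := Ioi_mem_nhds h1
      have heq : ∀ᶠ x in nhds σ, signEps ε x = (1 : ℝ) := by
        filter_upwards [hmem] with x hx using signEps_eq_one ε hε hx.le
      exact (hasDerivAt_const σ (1 : ℝ)).congr_of_eventuallyEq heq
    · have hmem : Set.Iio (-ε) ∈ nhds σ := Iio_mem_nhds (by linarith)
      have heq : ∀ᶠ x in nhds σ, signEps ε x = (-1 : ℝ) := by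
        filter_upwards [hmem] with x hx using signEps_eq_neg_one ε hε hx.le
      exact (hasDerivAt_const σ (-1 : ℝ)).congr_of_eventuallyEq heq

lemma sD_nonneg (ε : ℝ) (hε : 0 < ε) (σ : ℝ) : 0 ≤ sD ε σ := by
  rw [sD]
  split
  · exact le_rfl
  · rename_i h
    push_neg at h
    apply mul_nonneg (by positivity)
    apply Real.cos_nonneg_of_mem_Icc
    rcases abs_lt.1 h with ⟨h1, h2⟩
    constructor
    · rw [le_div_iff₀ (by positivity)]
      nlinarith [Real.pi_pos]
    · rw [div_le_iff₀ (by positivity)]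
      nlinarith [Real.pi_pos]

theorem stmt4 :
    ∃ C > (0 : ℝ), ∀ (A f : ℝ → ℝ) (η M ε : ℝ), 0 < η → 0 < ε → 0 ≤ M →
      Differentiable ℝ A → (∀ z, η ≤ deriv A z) →
      (∀ x y : ℝ, |f x - f y| ≤ M * |x - y|) →
      ∀ u c : ℝ,
        |∫ z in c..u, deriv (fun z => signEps ε (A z - A c)) z * (f z - f c)| ≤
          C * M * ε / η := by
  refine ⟨2, by norm_num, ?_⟩
  intro A f η M ε hη hε hM hA hA' hf u c
  set G : ℝ → ℝ := fun z => signEps ε (A z - A c) with hGdef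
  have hGd : ∀ z, HasDerivAt G (sD ε (A z - A c) * deriv A z) z := by
    intro z
    have h1 : HasDerivAt (fun z => A z - A c) (deriv A z) z := (hA z).hasDerivAt.sub_const _
    exact (hasDerivAt_signEps ε hε (A z - A c)).comp z h1
  have hGderiv : deriv G = fun z => sD ε (A z - A c) * deriv A z := funext fun z => (hGd z).deriv
  have hGd' : ∀ x, HasDerivAt G (deriv G x) x := by
    intro x; rw [hGderiv]; exact hGd x
  have hA'nonneg : ∀ z, 0 ≤ deriv A z := fun z => le_trans hη.le (hA' z)
  have hGnonneg : ∀ z, 0 ≤ deriv G z := by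
    intro z; rw [hGderiv]; exact mul_nonneg (sD_nonneg ε hε _) (hA'nonneg z)
  have hGcont : Continuous G := by
    rw [continuous_iff_continuousAt]
    exact fun z => (hGd z).differentiableAt.continuousAt
  have hMεη : (0:ℝ) ≤ M * ε / η := div_nonneg (mul_nonneg hM hε.le) hη.le
  -- key localization inequality
  have hB' : ∀ x, HasDerivAt (fun z => A z - η * z) (deriv A x - η) x := fun x =>
    (hA x).hasDerivAt.sub (by simpa using (hasDerivAt_id x).const_mul η)
  have hB : Monotone (fun z => A z - η * z) := by
    apply monotone_of_deriv_nonneg (fun x => (hB' x).differentiableAt)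
    intro x
    rw [(hB' x).deriv]
    linarith [hA' x]
  have hkey : ∀ z, η * |z - c| ≤ |A z - A c| := by
    intro z
    rcases le_total c z with h | h
    · have h2 := hB h
      simp only at h2
      rw [abs_of_nonneg (by linarith : (0:ℝ) ≤ z - c),
        abs_of_nonneg (by nlinarith : (0:ℝ) ≤ A z - A c)]
      nlinarith
    · have h2 := hB h
      simp only at h2
      rw [abs_of_nonpos (by linarith : z - c ≤ 0),
        abs_of_nonpos (by nlinarith : A z - A c ≤ 0)]
      nlinarith
  -- pointwise bound
  have hbound : ∀ z, |deriv G z * (f z - f c)| ≤ deriv G z * (M * ε / η) := by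
    intro z
    rcases le_or_gt ε (|A z - A c|) with h | h
    · have hz : sD ε (A z - A c) = 0 := by rw [sD, if_pos h]
      rw [hGderiv]
      simp only [hz, zero_mul, abs_zero, le_refl]
    · have hzc : |z - c| ≤ ε / η := by
        rw [le_div_iff₀ hη]
        have := hkey z
        nlinarith
      have hfb : |f z - f c| ≤ M * ε / η := by
        calc |f z - f c| ≤ M * |z - c| := hf z c
          _ ≤ M * (ε / η) := mul_le_mul_of_nonneg_left hzc hM
          _ = M * ε / η := by ring
      rw [abs_mul, abs_of_nonneg (hGnonneg z)]
      exact mul_le_mul_of_nonneg_left hfb (hGnonneg z)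
  have hfcont : Continuous f := by
    have : LipschitzWith (Real.toNNReal M) f := by
      apply LipschitzWith.of_dist_le_mul
      intro x y
      rw [Real.dist_eq, Real.dist_eq, Real.coe_toNNReal M hM]
      exact hf x y
    exact this.continuous
  have key : ∀ a b : ℝ, a ≤ b →
      |∫ z in a..b, deriv G z * (f z - f c)| ≤ 2 * M * ε / η := by
    intro a b hab
    have hIG : IntervalIntegrable (deriv G) MeasureTheory.volume a b := by
      apply intervalIntegral.intervalIntegrable_deriv_of_nonneg hGcont.continuousOn
      · intro x _; exact hGd' x
      · intro x _; exact hGnonneg x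
    have hint : IntervalIntegrable (fun z => deriv G z * (f z - f c))
        MeasureTheory.volume a b := by
      apply (hIG.mul_const (M * ε / η)).mono_fun
      · exact ((measurable_deriv G).mul
          (hfcont.measurable.sub measurable_const)).aestronglyMeasurable
      · apply Filter.Eventually.of_forall
        intro z
        simp only [Real.norm_eq_abs]
        exact (hbound z).trans (le_abs_self _)
    have hFTC : ∫ z in a..b, deriv G z = G b - G a :=
      intervalIntegral.integral_deriv_eq_sub (fun x _ => (hGd x).differentiableAt) hIG
    calc |∫ z in a..b, deriv G z * (f z - f c)|
        ≤ ∫ z in a..b, |deriv G z * (f z - f c)| := by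
          simpa only [Real.norm_eq_abs] using intervalIntegral.norm_integral_le_integral_norm
            (f := fun z => deriv G z * (f z - f c))
            (μ := MeasureTheory.volume) hab
      _ ≤ ∫ z in a..b, deriv G z * (M * ε / η) := by
          apply intervalIntegral.integral_mono_on hab hint.abs (hIG.mul_const _)
          intro x _
          exact hbound x
      _ = (G b - G a) * (M * ε / η) := by
          rw [intervalIntegral.integral_mul_const, hFTC]
      _ ≤ 2 * (M * ε / η) := by
          apply mul_le_mul_of_nonneg_right _ hMεη
          have h1 := abs_signEps_le_one ε (A b - A c)
          have h2 := abs_signEps_le_one ε (A a - A c)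
          rw [abs_le] at h1 h2
          have e1 : G b = signEps ε (A b - A c) := rfl
          have e2 : G a = signEps ε (A a - A c) := rfl
          rw [e1, e2]
          linarith [h1.2, h2.1]
      _ = 2 * M * ε / η := by ring
  rcases le_total c u with h | h
  · exact key c u h
  · rw [intervalIntegral.integral_symm u c, abs_neg]
    exact key u c h
end
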